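/- Let R be a finite local commutative ring with nonorientable genus of Γ(R, S) equal to 1, for some S ⊆ U(R) with S⁻¹ ⊆ S. Then |R| ≤ 9, and if R is a field then |R| ≤ 7. -/

import Mathlib

namespace CrosscapDef

open SimpleGraph

variable {V : Type*}

/-- An embedding scheme (rotation system together with an edge signature) for a simple
graph `G`: `rot` cyclically permutes the darts around each vertex (a single cycle at every
vertex), and `sgn d = true` means the edge of `d` is orientation-reversing. -/
structure Scheme {V : Type*} (G : SimpleGraph V) where
  rot : Equiv.Perm G.Dart
  rot_fst : ∀ d : G.Dart, (rot d).toProd.1 = d.toProd.1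
  rot_single : ∀ d e : G.Dart, d.toProd.1 = e.toProd.1 → rot.SameCycle d e
  sgn : G.Dart → Bool
  sgn_symm : ∀ d : G.Dart, sgn d.symm = sgn d

/-- Crossing an edge: reverse the dart and flip the local orientation according to the
signature. -/
def Scheme.flip {G : SimpleGraph V} (σ : Scheme G) : Equiv.Perm (G.Dart × Bool) :=
  Function.Involutive.toPerm (fun p => (p.1.symm, xor p.2 (σ.sgn p.1)))
    (by
      rintro ⟨d, s⟩
      simp [SimpleGraph.Dart.symm_symm, σ.sgn_symm, Bool.xor_assoc])

/-- Turning around a vertex: apply the rotation or its inverse, depending on the current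
local orientation. -/
def Scheme.step {G : SimpleGraph V} (σ : Scheme G) : Equiv.Perm (G.Dart × Bool) where
  toFun p := (cond p.2 (σ.rot p.1) (σ.rot.symm p.1), p.2)
  invFun p := (cond p.2 (σ.rot.symm p.1) (σ.rot p.1), p.2)
  left_inv := by rintro ⟨d, s⟩; cases s <;> simp
  right_inv := by rintro ⟨d, s⟩; cases s <;> simp

/-- The face-tracing permutation of an embedding scheme. -/
def Scheme.facePerm {G : SimpleGraph V} (σ : Scheme G) : Equiv.Perm (G.Dart × Bool) :=
  σ.step * σ.flip

/-- The number of cycles (orbits) of a permutation. -/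
noncomputable def cycleCount {α : Type*} (f : Equiv.Perm α) : ℕ :=
  Nat.card (Quotient (Setoid.mk f.SameCycle
    ⟨fun _ => Equiv.Perm.SameCycle.rfl, Equiv.Perm.SameCycle.symm, Equiv.Perm.SameCycle.trans⟩))

/-- The number of faces of an embedding scheme: each face is traced twice by `facePerm`. -/
noncomputable def Scheme.faceCount {G : SimpleGraph V} (σ : Scheme G) : ℕ :=
  cycleCount σ.facePerm / 2

/-- The Euler genus `2 - v + e - f` of (the surface of) an embedding scheme of a connected
graph. -/
noncomputable def Scheme.eulerGenus {G : SimpleGraph V} (σ : Scheme G) : ℤ :=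
  2 - (Nat.card V : ℤ) + ((Nat.card G.Dart / 2 : ℕ) : ℤ) - (σ.faceCount : ℤ)

/-- An embedding scheme is orientable iff its signature is switching-equivalent to the
all-positive signature. -/
def Scheme.Orientable {G : SimpleGraph V} (σ : Scheme G) : Prop :=
  ∃ f : V → Bool, ∀ d : G.Dart, σ.sgn d = xor (f d.toProd.1) (f d.toProd.2)

/-- `G` embeds in the sphere with `k` crosscaps: some connected supergraph of `G` (on the same
vertex set) has a cellular embedding scheme whose surface is the sphere with `k` crosscaps. -/
def EmbedsWithCrosscaps (G : SimpleGraph V) (k : ℕ) : Prop :=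
  ∃ H : SimpleGraph V, G ≤ H ∧ H.Preconnected ∧
    ∃ σ : Scheme H, σ.eulerGenus = (k : ℤ) ∧ (k = 0 ∨ ¬ σ.Orientable)

/-- `G` embeds in the sphere with `g` handles (an orientable surface of genus `g`). -/
def EmbedsWithHandles (G : SimpleGraph V) (g : ℕ) : Prop :=
  ∃ H : SimpleGraph V, G ≤ H ∧ H.Preconnected ∧
    ∃ σ : Scheme H, σ.eulerGenus = (2 * g : ℤ) ∧ σ.Orientable

/-- The nonorientable genus (crosscap number) of a finite graph: the least `k` such that `G`
embeds in the sphere with `k` crosscaps. -/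
noncomputable def crosscap (G : SimpleGraph V) : ℕ :=
  sInf {k : ℕ | EmbedsWithCrosscaps G k}

/-- The (orientable) genus of a finite graph. -/
noncomputable def genus (G : SimpleGraph V) : ℕ :=
  sInf {g : ℕ | EmbedsWithHandles G g}

/-- The nonorientable genus of an arbitrary (possibly infinite) graph: the supremum of the
nonorientable genera of its finite (induced) subgraphs. -/
noncomputable def crosscapE (G : SimpleGraph V) : ℕ∞ :=
  ⨆ s : Finset V, (crosscap (G.induce (s : Set V)) : ℕ∞)

end CrosscapDef

namespace CrosscapDef
/-- The generalized unit and unitary Cayley graph `Γ(R, G, S)`: vertices are the elements of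
`R`, and distinct `x`, `y` are adjacent iff `x + s*y` is a unit belonging to `G` for some
`s ∈ S`. -/
def gammaGraph (R : Type*) [CommRing R] (G : Subgroup Rˣ) (S : Set Rˣ)
    (hSG : S ⊆ (G : Set Rˣ)) (hS : S⁻¹ ⊆ S) : SimpleGraph R where
  Adj x y := x ≠ y ∧ ∃ s ∈ S, ∃ u ∈ G, (u : R) = x + (s : Rˣ) * y
  symm := by
    constructor
    rintro x y ⟨hxy, s, hs, u, hu, h⟩
    refine ⟨hxy.symm, s⁻¹, hS (by simpa using hs), s⁻¹ * u,
      mul_mem (inv_mem (hSG hs)) hu, ?_⟩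
    have h1 : ((s⁻¹ : Rˣ) : R) * (s : R) = 1 := Units.inv_mul s
    calc ((s⁻¹ * u : Rˣ) : R) = ((s⁻¹ : Rˣ) : R) * ((u : Rˣ) : R) := Units.val_mul _ _
      _ = ((s⁻¹ : Rˣ) : R) * (x + (s : Rˣ) * y) := by rw [h]
      _ = y + ((s⁻¹ : Rˣ) : R) * x := by rw [mul_add, ← mul_assoc, h1]; ring
  loopless := ⟨fun x h => h.1 rfl⟩

/-- The graph `Γ(R, S) = Γ(R, U(R), S)`. -/
def unitGammaGraph (R : Type*) [CommRing R] (S : Set Rˣ) (hS : S⁻¹ ⊆ S) : SimpleGraph R :=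
  gammaGraph R ⊤ S (fun x _ => by simp) hS

/-- The co-maximal graph of `R`: distinct `x`, `y` are adjacent iff `Rx + Ry = R`. -/
def comaximalGraph (R : Type*) [CommRing R] : SimpleGraph R where
  Adj x y := x ≠ y ∧ Ideal.span {x} ⊔ Ideal.span {y} = ⊤
  symm := by constructor; rintro x y ⟨h1, h2⟩; exact ⟨h1.symm, by rwa [sup_comm]⟩
  loopless := ⟨fun x h => h.1 rfl⟩

end CrosscapDef


namespace CrosscapAux

open CrosscapDef SimpleGraph Equiv

/-! ### Counting orbits -/

lemma quot_bound {α : Type*} [Fintype α] (s : Setoid α)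
    (h : ∀ x : α, ∃ a b c : α, s.r a x ∧ s.r b x ∧ s.r c x ∧ a ≠ b ∧ a ≠ c ∧ b ≠ c) :
    3 * Nat.card (Quotient s) ≤ Nat.card α := by
  classical
  simp only [Nat.card_eq_fintype_card]
  have hcard : Fintype.card α =
      ∑ q : Quotient s, (Finset.univ.filter fun x => Quotient.mk s x = q).card := by
    rw [← Finset.card_univ]
    exact Finset.card_eq_sum_card_fiberwise (fun x _ => Finset.mem_univ _)
  have key : ∀ q : Quotient s,
      3 ≤ (Finset.univ.filter fun x => Quotient.mk s x = q).card := by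
    intro q
    obtain ⟨x, rfl⟩ := Quotient.exists_rep q
    obtain ⟨a, b, c, ha, hb, hc, hab, hac, hbc⟩ := h x
    have hsub : ({a, b, c} : Finset α) ⊆
        Finset.univ.filter fun y => Quotient.mk s y = Quotient.mk s x := by
      intro y hy
      simp only [Finset.mem_insert, Finset.mem_singleton] at hy
      simp only [Finset.mem_filter, Finset.mem_univ, true_and]
      rcases hy with rfl | rfl | rfl
      · exact Quotient.sound ha
      · exact Quotient.sound hb
      · exact Quotient.sound hc
    have h3 : ({a, b, c} : Finset α).card = 3 := by
      rw [Finset.card_insert_of_notMem (by simp [hab, hac]),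
        Finset.card_insert_of_notMem (by simp [hbc]), Finset.card_singleton]
    calc (3 : ℕ) = ({a, b, c} : Finset α).card := h3.symm
      _ ≤ _ := Finset.card_le_card hsub
  rw [hcard]
  calc 3 * Fintype.card (Quotient s) = ∑ _q : Quotient s, 3 := by
        simp [Finset.sum_const, mul_comm]
    _ ≤ _ := Finset.sum_le_sum fun q _ => key q

lemma three_mul_cycleCount_le {α : Type*} [Finite α] (f : Equiv.Perm α)
    (h1 : ∀ x, f x ≠ x) (h2 : ∀ x, f (f x) ≠ x) :
    3 * cycleCount f ≤ Nat.card α := by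
  classical
  cases nonempty_fintype α
  refine quot_bound _ ?_
  intro x
  refine ⟨x, f x, f (f x), Equiv.Perm.SameCycle.rfl, ⟨-1, by simp⟩, ⟨-2, ?_⟩,
    fun h => h1 x h.symm, fun h => h2 x h.symm, fun h => h1 (f x) h.symm⟩
  show (f ^ (-2 : ℤ)) (f (f x)) = x
  have hz : (f ^ (-2 : ℤ)) = (f⁻¹) ^ (2 : ℕ) := by
    rw [inv_pow, ← zpow_natCast, ← zpow_neg]
    norm_num
  rw [hz]
  simp [pow_succ]

/-! ### Face permutation analysis -/

instance dartFinite {V : Type*} [Finite V] (G : SimpleGraph V) : Finite G.Dart :=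
  Finite.of_injective _ (SimpleGraph.Dart.toProd_injective (G := G))

variable {V : Type*} {H : SimpleGraph V}

lemma rot_symm_fst (σ : Scheme H) (d : H.Dart) :
    (σ.rot.symm d).toProd.1 = d.toProd.1 := by
  have h := σ.rot_fst (σ.rot.symm d)
  rw [Equiv.apply_symm_apply] at h
  exact h.symm

lemma facePerm_apply (σ : Scheme H) (d : H.Dart) (b : Bool) :
    σ.facePerm (d, b) =
      (cond (xor b (σ.sgn d)) (σ.rot d.symm) (σ.rot.symm d.symm), xor b (σ.sgn d)) := rfl

lemma facePerm_fst (σ : Scheme H) (d : H.Dart) (b : Bool) :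
    ((σ.facePerm (d, b)).1).toProd.1 = d.toProd.2 := by
  rw [facePerm_apply]
  cases xor b (σ.sgn d) <;>
    simp [σ.rot_fst, rot_symm_fst]

lemma facePerm_ne (σ : Scheme H) (p : H.Dart × Bool) : σ.facePerm p ≠ p := by
  obtain ⟨d, b⟩ := p
  intro hEq
  have h1 : ((σ.facePerm (d, b)).1).toProd.1 = d.toProd.1 := by rw [hEq]
  rw [facePerm_fst] at h1
  exact d.adj.ne h1.symm

lemma facePerm_sq_ne (σ : Scheme H) (hrot : ∀ d : H.Dart, σ.rot d ≠ d)
    (p : H.Dart × Bool) : σ.facePerm (σ.facePerm p) ≠ p := by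
  obtain ⟨d, b⟩ := p
  intro hEq
  set c := xor b (σ.sgn d) with hc
  set r : H.Dart := cond c (σ.rot d.symm) (σ.rot.symm d.symm) with hr
  have h1 : σ.facePerm (d, b) = (r, c) := facePerm_apply σ d b
  rw [h1, facePerm_apply] at hEq
  have hd : cond (xor c (σ.sgn r)) (σ.rot r.symm) (σ.rot.symm r.symm) = d :=
    congrArg Prod.fst hEq
  have hrfst : r.toProd.1 = d.toProd.2 := by
    rw [hr]; cases c <;> simp [σ.rot_fst, rot_symm_fst]
  have hrsnd : r.toProd.2 = d.toProd.1 := by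
    have hsymm1 : r.symm.toProd.1 = d.toProd.1 := by
      cases hxc : xor c (σ.sgn r) <;> rw [hxc] at hd <;>
        simp only [Bool.cond_false, Bool.cond_true] at hd
      · have h2 : r.symm = σ.rot d := by
          have h3 := congrArg σ.rot hd
          rwa [Equiv.apply_symm_apply] at h3
        rw [h2, σ.rot_fst]
      · have h2 : r.symm = σ.rot.symm d := by
          have h3 := congrArg σ.rot.symm hd
          rwa [Equiv.symm_apply_apply] at h3
        rw [h2, rot_symm_fst]
    rwa [SimpleGraph.Dart.symm_toProd, Prod.fst_swap] at hsymm1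
  have hrd : r = d.symm := by
    apply SimpleGraph.Dart.ext
    rw [SimpleGraph.Dart.symm_toProd]
    exact Prod.ext hrfst hrsnd
  rw [hr] at hrd
  by_cases hcc : c = true
  · rw [hcc] at hrd; simp only [Bool.cond_true] at hrd
    exact hrot d.symm hrd
  · rw [Bool.not_eq_true] at hcc; rw [hcc] at hrd; simp only [Bool.cond_false] at hrd
    have h4 := congrArg σ.rot hrd
    rw [Equiv.apply_symm_apply] at h4
    exact hrot d.symm h4.symm

lemma dart_bound [Finite V] [Nonempty V] (σ : Scheme H)
    (hgen : σ.eulerGenus = 1) (hrot : ∀ d : H.Dart, σ.rot d ≠ d) :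
    Nat.card H.Dart + 6 ≤ 6 * Nat.card V := by
  classical
  cases nonempty_fintype V
  have h3 : 3 * cycleCount σ.facePerm ≤ Nat.card (H.Dart × Bool) :=
    three_mul_cycleCount_le _ (facePerm_ne σ) (facePerm_sq_ne σ hrot)
  rw [Nat.card_prod] at h3
  have hbool : Nat.card Bool = 2 := by
    simp [Nat.card_eq_fintype_card]
  rw [hbool] at h3
  have hD : Nat.card H.Dart = 2 * H.edgeFinset.card := by
    rw [Nat.card_eq_fintype_card]; exact SimpleGraph.dart_card_eq_twice_card_edges H
  have hv1 : 0 < Nat.card V := Nat.card_pos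
  unfold Scheme.eulerGenus Scheme.faceCount at hgen
  omega

/-! ### Dart counting -/

def dartSigmaEquiv (G : SimpleGraph V) : G.Dart ≃ Σ x : V, {y : V // G.Adj x y} where
  toFun d := ⟨d.toProd.1, d.toProd.2, d.adj⟩
  invFun p := ⟨(p.1, p.2.1), p.2.2⟩
  left_inv d := by obtain ⟨⟨a, b⟩, h⟩ := d; rfl
  right_inv p := rfl

lemma dart_card_eq_sum [Fintype V] (G : SimpleGraph V) :
    Nat.card G.Dart = ∑ x : V, Nat.card {y : V // G.Adj x y} := by
  classical
  rw [Nat.card_congr (dartSigmaEquiv G), Nat.card_eq_fintype_card, Fintype.card_sigma]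
  exact Finset.sum_congr rfl fun x _ => (Nat.card_eq_fintype_card).symm


/-! ### A planar scheme on a star graph -/

lemma cycleCount_eq_two {α : Type*} [Finite α] (f : Equiv.Perm α) (g : α → Bool)
    (hg : Function.Surjective g)
    (hf : ∀ p q, f.SameCycle p q ↔ g p = g q) :
    cycleCount f = 2 := by
  classical
  unfold cycleCount
  have hbij : Function.Bijective
      (Quotient.lift g (fun p q h => (hf p q).1 h) :
        Quotient (Setoid.mk f.SameCycle
          ⟨fun _ => Equiv.Perm.SameCycle.rfl, Equiv.Perm.SameCycle.symm,
            Equiv.Perm.SameCycle.trans⟩) → Bool) := by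
    constructor
    · intro a b
      induction a using Quotient.ind
      induction b using Quotient.ind
      intro hab
      exact Quotient.sound ((hf _ _).2 hab)
    · intro b
      obtain ⟨a, rfl⟩ := hg b
      exact ⟨Quotient.mk _ a, rfl⟩
  rw [Nat.card_congr (Equiv.ofBijective _ hbij)]
  simp [Nat.card_eq_fintype_card]

section Star

variable {W : Type*} [DecidableEq W] (c : W)

def starGraph : SimpleGraph W where
  Adj x y := (x = c ∧ y ≠ c) ∨ (y = c ∧ x ≠ c)
  symm := ⟨fun x y h => by tauto⟩
  loopless := ⟨fun x h => by tauto⟩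

lemma starGraph_adj {x y : W} :
    (starGraph c).Adj x y ↔ (x = c ∧ y ≠ c) ∨ (y = c ∧ x ≠ c) := Iff.rfl

def starDart : ({y : W // y ≠ c} × Bool) → (starGraph c).Dart
  | (t, true) => ⟨(c, t.1), Or.inl ⟨rfl, t.2⟩⟩
  | (t, false) => ⟨(t.1, c), Or.inr ⟨rfl, t.2⟩⟩

lemma starDart_toProd_true (t : {y : W // y ≠ c}) :
    (starDart c (t, true)).toProd = (c, t.1) := rfl

lemma starDart_toProd_false (t : {y : W // y ≠ c}) :
    (starDart c (t, false)).toProd = (t.1, c) := rfl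

lemma starDart_bijective : Function.Bijective (starDart c) := by
  constructor
  · rintro ⟨t, bt⟩ ⟨u, bu⟩ hEq
    have h2 := congrArg SimpleGraph.Dart.toProd hEq
    cases bt <;> cases bu <;>
      simp only [starDart_toProd_true, starDart_toProd_false, Prod.mk.injEq] at h2
    · exact Prod.ext (Subtype.ext h2.1) rfl
    · exact absurd h2.1 t.2
    · exact absurd h2.1.symm u.2
    · exact Prod.ext (Subtype.ext h2.2) rfl
  · intro d
    rcases (starGraph_adj c).1 d.adj with ⟨h1, h2⟩ | ⟨h1, h2⟩
    · exact ⟨(⟨d.toProd.2, h2⟩, true),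
        SimpleGraph.Dart.ext _ _ (Prod.ext h1.symm rfl)⟩
    · exact ⟨(⟨d.toProd.1, h2⟩, false),
        SimpleGraph.Dart.ext _ _ (Prod.ext rfl h1.symm)⟩

noncomputable def starEquiv : ({y : W // y ≠ c} × Bool) ≃ (starGraph c).Dart :=
  Equiv.ofBijective _ (starDart_bijective c)

lemma starDartSymm_true (t : {y : W // y ≠ c}) :
    (starEquiv c (t, true)).symm = starEquiv c (t, false) :=
  SimpleGraph.Dart.ext _ _ rfl

lemma starDartSymm_false (t : {y : W // y ≠ c}) :
    (starEquiv c (t, false)).symm = starEquiv c (t, true) :=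
  SimpleGraph.Dart.ext _ _ rfl

def condPerm {T : Type*} (σ : Equiv.Perm T) : Equiv.Perm (T × Bool) where
  toFun p := (cond p.2 (σ p.1) p.1, p.2)
  invFun p := (cond p.2 (σ.symm p.1) p.1, p.2)
  left_inv := by rintro ⟨t, (_ | _)⟩ <;> simp
  right_inv := by rintro ⟨t, (_ | _)⟩ <;> simp

lemma condPerm_true {T : Type*} (σ : Equiv.Perm T) (t : T) :
    condPerm σ (t, true) = (σ t, true) := rfl

lemma condPerm_false {T : Type*} (σ : Equiv.Perm T) (t : T) :
    condPerm σ (t, false) = (t, false) := rfl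

lemma condPerm_symm_true {T : Type*} (σ : Equiv.Perm T) (t : T) :
    (condPerm σ).symm (t, true) = (σ.symm t, true) := rfl

lemma condPerm_symm_false {T : Type*} (σ : Equiv.Perm T) (t : T) :
    (condPerm σ).symm (t, false) = (t, false) := rfl

lemma condPerm_pow_true {T : Type*} (σ : Equiv.Perm T) (k : ℕ) (t : T) :
    ((condPerm σ) ^ k) (t, true) = ((σ ^ k) t, true) := by
  induction k generalizing t with
  | zero => simp
  | succ k ih =>
    rw [pow_succ, Equiv.Perm.mul_apply, condPerm_true, ih, pow_succ σ k,
      Equiv.Perm.mul_apply]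

variable (σT : Equiv.Perm {y : W // y ≠ c})

noncomputable def starRot : Equiv.Perm (starGraph c).Dart :=
  (starEquiv c).permCongr (condPerm σT)

lemma starRot_apply (p : {y : W // y ≠ c} × Bool) :
    starRot c σT (starEquiv c p) = starEquiv c (condPerm σT p) := by
  simp [starRot]

lemma starRot_symm_apply (p : {y : W // y ≠ c} × Bool) :
    (starRot c σT).symm (starEquiv c p) = starEquiv c ((condPerm σT).symm p) := by
  rw [Equiv.symm_apply_eq, starRot_apply, Equiv.apply_symm_apply]

lemma starRot_pow (k : ℕ) (p : {y : W // y ≠ c} × Bool) :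
    ((starRot c σT) ^ k) (starEquiv c p) = starEquiv c ((condPerm σT ^ k) p) := by
  induction k generalizing p with
  | zero => simp
  | succ k ih =>
    rw [pow_succ, Equiv.Perm.mul_apply, starRot_apply, ih, ← Equiv.Perm.mul_apply,
      ← pow_succ]

noncomputable def starScheme
    (hσ : ∀ t t' : {y : W // y ≠ c}, ∃ k : ℕ, (σT ^ k) t = t') :
    Scheme (starGraph c) where
  rot := starRot c σT
  rot_fst := by
    intro d
    obtain ⟨⟨t, b⟩, rfl⟩ := (starEquiv c).surjective d
    cases b
    · rw [starRot_apply, condPerm_false]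
    · rw [starRot_apply, condPerm_true]; rfl
  rot_single := by
    intro d e hfst
    obtain ⟨⟨t, bt⟩, rfl⟩ := (starEquiv c).surjective d
    obtain ⟨⟨u, bu⟩, rfl⟩ := (starEquiv c).surjective e
    cases bt <;> cases bu
    · have ht : t = u := Subtype.ext hfst
      rw [ht]
    · exact absurd hfst t.2
    · exact absurd hfst.symm u.2
    · obtain ⟨k, hk⟩ := hσ t u
      exact ⟨(k : ℤ), by rw [zpow_natCast, starRot_pow, condPerm_pow_true, hk]⟩
  sgn := fun _ => false
  sgn_symm := fun _ => rfl

variable (hσ : ∀ t t' : {y : W // y ≠ c}, ∃ k : ℕ, (σT ^ k) t = t')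

lemma starScheme_rot : (starScheme c σT hσ).rot = starRot c σT := rfl

lemma starScheme_sgn (d : (starGraph c).Dart) : (starScheme c σT hσ).sgn d = false := rfl

lemma star_facePerm_true (t : {y : W // y ≠ c}) (b : Bool) :
    (starScheme c σT hσ).facePerm (starEquiv c (t, true), b)
      = (starEquiv c (t, false), b) := by
  rw [facePerm_apply]
  simp only [starScheme_sgn, Bool.xor_false, starScheme_rot]
  rw [starDartSymm_true]
  cases b
  · simp only [Bool.cond_false]
    rw [starRot_symm_apply, condPerm_symm_false]
  · simp only [Bool.cond_true]
    rw [starRot_apply, condPerm_false]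

lemma star_facePerm_false_true (t : {y : W // y ≠ c}) :
    (starScheme c σT hσ).facePerm (starEquiv c (t, false), true)
      = (starEquiv c (σT t, true), true) := by
  rw [facePerm_apply]
  simp only [starScheme_sgn, Bool.xor_false, starScheme_rot, Bool.cond_true]
  rw [starDartSymm_false, starRot_apply, condPerm_true]

lemma star_facePerm_false_false (t : {y : W // y ≠ c}) :
    (starScheme c σT hσ).facePerm (starEquiv c (t, false), false)
      = (starEquiv c (σT.symm t, true), false) := by
  rw [facePerm_apply]
  simp only [starScheme_sgn, Bool.xor_false, starScheme_rot, Bool.cond_false]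
  rw [starDartSymm_false, starRot_symm_apply, condPerm_symm_true]

lemma star_facePerm_snd (p : (starGraph c).Dart × Bool) :
    ((starScheme c σT hσ).facePerm p).2 = p.2 := by
  obtain ⟨d, b⟩ := p
  rw [facePerm_apply]
  simp [starScheme_sgn]

lemma star_facePerm_pow_snd (k : ℕ) (p : (starGraph c).Dart × Bool) :
    (((starScheme c σT hσ).facePerm ^ k) p).2 = p.2 := by
  induction k generalizing p with
  | zero => simp
  | succ k ih =>
    rw [pow_succ, Equiv.Perm.mul_apply, ih, star_facePerm_snd]

lemma star_two_pow_true (k : ℕ) (t : {y : W // y ≠ c}) :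
    ((starScheme c σT hσ).facePerm ^ (2 * k)) (starEquiv c (t, true), true)
      = (starEquiv c ((σT ^ k) t, true), true) := by
  induction k generalizing t with
  | zero => simp
  | succ k ih =>
    have h2 : 2 * (k + 1) = 2 * k + 1 + 1 := by ring
    rw [h2, pow_succ, pow_succ, Equiv.Perm.mul_apply, Equiv.Perm.mul_apply,
      star_facePerm_true, star_facePerm_false_true, ih, ← Equiv.Perm.mul_apply,
      ← pow_succ]

lemma star_two_pow_false (k : ℕ) (t : {y : W // y ≠ c}) :
    ((starScheme c σT hσ).facePerm ^ (2 * k)) (starEquiv c (t, true), false)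
      = (starEquiv c ((σT.symm ^ k) t, true), false) := by
  induction k generalizing t with
  | zero => simp
  | succ k ih =>
    have h2 : 2 * (k + 1) = 2 * k + 1 + 1 := by ring
    rw [h2, pow_succ, pow_succ, Equiv.Perm.mul_apply, Equiv.Perm.mul_apply,
      star_facePerm_true, star_facePerm_false_false, ih, ← Equiv.Perm.mul_apply,
      ← pow_succ]

lemma star_sameCycle (p q : (starGraph c).Dart × Bool) (h2 : p.2 = q.2) :
    Equiv.Perm.SameCycle ((starScheme c σT hσ).facePerm) p q := by
  obtain ⟨d, b⟩ := p
  obtain ⟨e, b'⟩ := q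
  simp only at h2
  subst h2
  obtain ⟨⟨t, bt⟩, rfl⟩ := (starEquiv c).surjective d
  obtain ⟨⟨u, bu⟩, rfl⟩ := (starEquiv c).surjective e
  have key : ∀ t' : {y : W // y ≠ c},
      Equiv.Perm.SameCycle ((starScheme c σT hσ).facePerm)
        (starEquiv c (t', true), b) (starEquiv c (t', false), b) := by
    intro t'
    exact ⟨1, by rw [zpow_one, star_facePerm_true]⟩
  have conn : ∀ t' u' : {y : W // y ≠ c},
      Equiv.Perm.SameCycle ((starScheme c σT hσ).facePerm)
        (starEquiv c (t', true), b) (starEquiv c (u', true), b) := by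
    intro t' u'
    cases b
    · obtain ⟨k, hk⟩ := hσ u' t'
      have hk' : ((σT.symm) ^ k) t' = u' := by
        rw [show σT.symm = σT⁻¹ from rfl, inv_pow, ← hk]
        exact (σT ^ k).symm_apply_apply u'
      exact ⟨((2 * k : ℕ) : ℤ), by rw [zpow_natCast, star_two_pow_false, hk']⟩
    · obtain ⟨k, hk⟩ := hσ t' u'
      exact ⟨((2 * k : ℕ) : ℤ), by rw [zpow_natCast, star_two_pow_true, hk]⟩
  cases bt <;> cases bu
  · exact ((key t).symm.trans ((conn t u).trans (key u)))
  · exact (key t).symm.trans (conn t u)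
  · exact (conn t u).trans (key u)
  · exact conn t u

lemma star_cycleCount [Finite W] [Nonempty {y : W // y ≠ c}] :
    cycleCount (starScheme c σT hσ).facePerm = 2 := by
  classical
  obtain ⟨t0⟩ := (inferInstance : Nonempty {y : W // y ≠ c})
  refine cycleCount_eq_two _ (fun p => p.2) ?_ ?_
  · intro b
    exact ⟨(starEquiv c (t0, true), b), rfl⟩
  · intro p q
    constructor
    · intro hpq
      obtain ⟨i, -, hi⟩ := hpq.exists_pow_eq'
      show p.2 = q.2
      rw [← hi, star_facePerm_pow_snd]
    · exact star_sameCycle c σT hσ p q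

end Star

open Fin.NatCast in
lemma star_embeds {W : Type*} [Finite W] [Nontrivial W] (G : SimpleGraph W)
    (hG : ∀ x y, ¬ G.Adj x y) : EmbedsWithCrosscaps G 0 := by
  classical
  obtain ⟨c⟩ := (inferInstance : Nonempty W)
  obtain ⟨y0, hy0⟩ := exists_ne c
  haveI : Nonempty {y : W // y ≠ c} := ⟨⟨y0, hy0⟩⟩
  set n := Nat.card {y : W // y ≠ c} with hn
  have hn1 : 0 < n := Nat.card_pos
  haveI : NeZero n := ⟨hn1.ne'⟩
  let ψ : {y : W // y ≠ c} ≃ Fin n := Finite.equivFin _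
  let σT : Equiv.Perm {y : W // y ≠ c} :=
    (ψ.trans (Equiv.addRight (1 : Fin n))).trans ψ.symm
  have hσpow : ∀ (k : ℕ) (t : {y : W // y ≠ c}),
      (σT ^ k) t = ψ.symm (ψ t + (k : Fin n)) := by
    intro k
    induction k with
    | zero => intro t; simp
    | succ k ih =>
      intro t
      rw [pow_succ, Equiv.Perm.mul_apply, ih]
      show ψ.symm (ψ (ψ.symm (ψ t + 1)) + (k : Fin n)) = _
      rw [Equiv.apply_symm_apply]
      congr 1
      push_cast
      abel
  have hσ : ∀ t t' : {y : W // y ≠ c}, ∃ k : ℕ, (σT ^ k) t = t' := by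
    intro t t'
    refine ⟨(ψ t' - ψ t : Fin n).1, ?_⟩
    rw [hσpow, Fin.cast_val_eq_self, add_comm, sub_add_cancel]
    exact ψ.symm_apply_apply t'
  refine ⟨starGraph c, fun x y hxy => absurd hxy (hG x y), ?_,
    starScheme c σT hσ, ?_, Or.inl rfl⟩
  · intro x y
    have hreach : ∀ z : W, z ≠ c → (starGraph c).Reachable c z := fun z hz =>
      SimpleGraph.Adj.reachable (show (starGraph c).Adj c z from Or.inl ⟨rfl, hz⟩)
    by_cases hxy : x = y
    · subst hxy; exact SimpleGraph.Reachable.refl x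
    · by_cases hxc : x = c
      · subst hxc; exact hreach y (fun h => hxy h.symm)
      · by_cases hyc : y = c
        · subst hyc; exact (hreach x hxc).symm
        · exact ((hreach x hxc).symm.trans (hreach y hyc))
  · have hface : (starScheme c σT hσ).faceCount = 1 := by
      unfold Scheme.faceCount
      rw [star_cycleCount]
    have hdarts : Nat.card (starGraph c).Dart = n * 2 := by
      rw [← Nat.card_congr (starEquiv c), Nat.card_prod, ← hn]
      congr 1
      simp [Nat.card_eq_fintype_card]
    have hW : Nat.card W = n + 1 := by
      haveI : Unique {y : W // ¬ y ≠ c} :=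
        ⟨⟨⟨c, fun h => h rfl⟩⟩, by
          rintro ⟨y, hy⟩; exact Subtype.ext (not_ne_iff.mp hy)⟩
      have h1 : Nat.card {y : W // ¬ y ≠ c} = 1 := Nat.card_unique
      rw [← Nat.card_congr (Equiv.sumCompl (fun y : W => y ≠ c)), Nat.card_sum, h1, ← hn]
    show (starScheme c σT hσ).eulerGenus = ((0 : ℕ) : ℤ)
    unfold Scheme.eulerGenus
    rw [hface, hdarts, hW]
    push_cast
    omega


/-! ### Finite local ring facts -/

section RingCard

variable (R : Type*) [CommRing R] [Finite R] [IsLocalRing R]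

open IsLocalRing

lemma card_units_add_card_max :
    Nat.card Rˣ + Nat.card (maximalIdeal R) = Nat.card R := by
  classical
  have e1 : Rˣ ≃ {x : R // IsUnit x} :=
    ⟨fun u => ⟨u, u.isUnit⟩, fun x => x.2.unit,
      fun u => Units.ext u.isUnit.unit_spec, fun x => Subtype.ext x.2.unit_spec⟩
  have e2 : {x : R // ¬ IsUnit x} ≃ (maximalIdeal R) :=
    Equiv.subtypeEquivRight (fun x => by
      simp [IsLocalRing.mem_maximalIdeal, mem_nonunits_iff])
  calc Nat.card Rˣ + Nat.card (maximalIdeal R)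
      = Nat.card {x : R // IsUnit x} + Nat.card {x : R // ¬ IsUnit x} := by
        rw [Nat.card_congr e1, Nat.card_congr e2]
    _ = Nat.card ({x : R // IsUnit x} ⊕ {x : R // ¬ IsUnit x}) := (Nat.card_sum).symm
    _ = Nat.card R := Nat.card_congr (Equiv.sumCompl _)

lemma card_max_dvd : Nat.card (maximalIdeal R) ∣ Nat.card R := by
  have h := AddSubgroup.card_addSubgroup_dvd_card ((maximalIdeal R).toAddSubgroup)
  have he : Nat.card ((maximalIdeal R).toAddSubgroup) = Nat.card (maximalIdeal R) :=
    Nat.card_congr (Equiv.subtypeEquivRight fun x => Iff.rfl)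
  rwa [he] at h

lemma not_isUnit_of_prime_dvd_card {p : ℕ} (hp : p.Prime) (hdvd : p ∣ Nat.card R) :
    ¬ IsUnit (p : R) := by
  classical
  cases nonempty_fintype R
  rw [Nat.card_eq_fintype_card] at hdvd
  haveI : Fact p.Prime := ⟨hp⟩
  obtain ⟨x, hx⟩ := exists_prime_addOrderOf_dvd_card (G := R) p hdvd
  intro hu
  have hx0 : x ≠ 0 := by
    intro h0
    rw [h0, addOrderOf_zero] at hx
    exact hp.one_lt.ne' hx.symm
  have hpx : (p : R) * x = 0 := by
    have h1 := addOrderOf_nsmul_eq_zero x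
    rw [hx, nsmul_eq_mul] at h1
    exact h1
  exact hx0 ((hu.mul_right_eq_zero).mp hpx)

lemma mem_max_of_prime_dvd_card {p : ℕ} (hp : p.Prime) (hdvd : p ∣ Nat.card R) :
    (p : R) ∈ maximalIdeal R :=
  (IsLocalRing.mem_maximalIdeal _).mpr
    (mem_nonunits_iff.mpr (not_isUnit_of_prime_dvd_card R hp hdvd))

lemma field_card_max (hf : IsField R) : Nat.card (maximalIdeal R) = 1 := by
  haveI : Unique (maximalIdeal R) :=
    ⟨⟨0⟩, by
      rintro ⟨x, hx⟩
      apply Subtype.ext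
      show x = 0
      by_contra h0
      obtain ⟨y, hy⟩ := hf.mul_inv_cancel h0
      exact ((IsLocalRing.mem_maximalIdeal x).mp hx) (IsUnit.of_mul_eq_one y hy)⟩
  exact Nat.card_unique

end RingCard


end CrosscapAux

open CrosscapDef in
/-- If `R` is a finite local commutative ring with `γ̃(Γ(R, S)) = 1`, then `|R| ≤ 9`, and if
`R` is a field then `|R| ≤ 7`. -/
theorem card_le_of_local_crosscap_eq_one {R : Type*} [CommRing R] [Finite R] [IsLocalRing R]
    (S : Set Rˣ) (hS : S⁻¹ ⊆ S) (h : crosscap (unitGammaGraph R S hS) = 1) :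
    Nat.card R ≤ 9 ∧ (IsField R → Nat.card R ≤ 7) := by
  classical
  open CrosscapAux in
  set G := unitGammaGraph R S hS with hGdef
  have hsum := CrosscapAux.card_units_add_card_max R
  have hdvd := CrosscapAux.card_max_dvd R
  have hu1 : 0 < Nat.card Rˣ := Nat.card_pos
  have hv2 : 2 ≤ Nat.card R := Finite.one_lt_card
  have hne : {k : ℕ | EmbedsWithCrosscaps G k}.Nonempty := by
    by_contra hcon
    rw [Set.not_nonempty_iff_eq_empty] at hcon
    have h0 : crosscap G = 0 := by
      show sInf {k : ℕ | EmbedsWithCrosscaps G k} = 0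
      rw [hcon]
      exact Nat.sInf_empty
    omega
  have hsInf : sInf {k : ℕ | EmbedsWithCrosscaps G k} = 1 := h
  have h1mem : EmbedsWithCrosscaps G 1 := by
    have hmem := Nat.sInf_mem hne
    rwa [hsInf] at hmem
  have h0not : ¬ EmbedsWithCrosscaps G 0 := by
    intro h0
    have hle : sInf {k : ℕ | EmbedsWithCrosscaps G k} ≤ 0 := Nat.sInf_le h0
    omega
  rcases Set.eq_empty_or_nonempty S with hSe | ⟨s, hsS⟩
  · exfalso
    apply h0not
    apply CrosscapAux.star_embeds
    intro x y hxy
    obtain ⟨-, s', hs', -⟩ := (hxy : x ≠ y ∧ ∃ s ∈ S, ∃ u ∈ (⊤ : Subgroup Rˣ), (u : R) = x + (s : Rˣ) * y)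
    rw [hSe] at hs'
    exact hs'
  · -- degree bound
    have hdeg : ∀ x : R, Nat.card Rˣ - 1 ≤ Nat.card {y : R // G.Adj x y} := by
      intro x
      set f : {u : Rˣ // ¬ ((u : R) = x + (s : R) * x)} → {y : R // G.Adj x y} := fun u =>
        ⟨((s⁻¹ : Rˣ) : R) * ((u.1 : R) - x), by
          have hadj : x ≠ ((s⁻¹ : Rˣ) : R) * ((u.1 : R) - x) ∧
              ∃ s' ∈ S, ∃ w ∈ (⊤ : Subgroup Rˣ),
                (w : R) = x + (s' : R) * (((s⁻¹ : Rˣ) : R) * ((u.1 : R) - x)) := by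
            constructor
            · intro hxy
              have hsx : (s : R) * x = (u.1 : R) - x := by
                conv_lhs => rw [hxy]
                rw [← mul_assoc, Units.mul_inv, one_mul]
              exact u.2 (by linear_combination -hsx)
            · exact ⟨s, hsS, u.1, Subgroup.mem_top _, by
                rw [← mul_assoc, Units.mul_inv, one_mul]; ring⟩
          exact hadj⟩ with hfdef
      have hinj : Function.Injective f := by
        intro u v huv
        have h1 : ((s⁻¹ : Rˣ) : R) * ((u.1 : R) - x) = ((s⁻¹ : Rˣ) : R) * ((v.1 : R) - x) :=
          congrArg Subtype.val huv
        have h3 := congrArg (fun z => (s : R) * z) h1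
        rw [← mul_assoc, ← mul_assoc, Units.mul_inv, one_mul, one_mul] at h3
        exact Subtype.ext (Units.ext (sub_left_inj.mp h3))
      have hle1 := Nat.card_le_card_of_injective f hinj
      have hsplit : Nat.card {u : Rˣ // (u : R) = x + (s : R) * x}
          + Nat.card {u : Rˣ // ¬ ((u : R) = x + (s : R) * x)} = Nat.card Rˣ := by
        rw [← Nat.card_sum]
        exact Nat.card_congr (Equiv.sumCompl _)
      have hone : Nat.card {u : Rˣ // (u : R) = x + (s : R) * x} ≤ 1 := by
        have hss : ∀ a b : {u : Rˣ // (u : R) = x + (s : R) * x}, a = b := by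
          rintro ⟨a, ha⟩ ⟨b, hb⟩
          exact Subtype.ext (Units.ext (ha.trans hb.symm))
        calc Nat.card {u : Rˣ // (u : R) = x + (s : R) * x}
            ≤ Nat.card Unit :=
              Nat.card_le_card_of_injective (fun _ => ()) (fun a b _ => hss a b)
          _ = 1 := Nat.card_unique
      omega
    have hu6 : Nat.card Rˣ ≤ 6 := by
      by_contra hcon
      push_neg at hcon
      obtain ⟨H, hGH, hpre, σ, hgenus, -⟩ := h1mem
      have hrot : ∀ d : H.Dart, σ.rot d ≠ d := by
        intro d hfix
        have h2c : 1 < Nat.card {y : R // G.Adj d.toProd.1 y} := by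
          have := hdeg d.toProd.1; omega
        have hnt : Nontrivial {y : R // G.Adj d.toProd.1 y} :=
          Finite.one_lt_card_iff_nontrivial.mp h2c
        obtain ⟨⟨y1, hy1⟩, ⟨y2, hy2⟩, hne12⟩ := hnt
        have he1 : (⟨(d.toProd.1, y1), hGH hy1⟩ : H.Dart) = d := by
          obtain ⟨i, hi⟩ := σ.rot_single d ⟨(d.toProd.1, y1), hGH hy1⟩ rfl
          rw [Equiv.Perm.zpow_apply_eq_self_of_apply_eq_self hfix] at hi
          exact hi.symm
        have he2 : (⟨(d.toProd.1, y2), hGH hy2⟩ : H.Dart) = d := by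
          obtain ⟨i, hi⟩ := σ.rot_single d ⟨(d.toProd.1, y2), hGH hy2⟩ rfl
          rw [Equiv.Perm.zpow_apply_eq_self_of_apply_eq_self hfix] at hi
          exact hi.symm
        exact hne12 (Subtype.ext
          (congrArg (fun e : H.Dart => e.toProd.2) (he1.trans he2.symm)))
      have hgen1 : σ.eulerGenus = 1 := by exact_mod_cast hgenus
      have hbound := CrosscapAux.dart_bound σ hgen1 hrot
      cases nonempty_fintype R
      have hsumdart := CrosscapAux.dart_card_eq_sum G
      have hGd : Nat.card R * (Nat.card Rˣ - 1) ≤ Nat.card G.Dart := by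
        rw [hsumdart]
        calc Nat.card R * (Nat.card Rˣ - 1)
            = ∑ _x : R, (Nat.card Rˣ - 1) := by
              rw [Finset.sum_const, Finset.card_univ, Nat.card_eq_fintype_card, smul_eq_mul]
          _ ≤ _ := Finset.sum_le_sum fun x _ => hdeg x
      have hinj2 : Function.Injective (fun d : G.Dart => (⟨d.toProd, hGH d.adj⟩ : H.Dart)) := by
        intro a b hab
        have h2 := congrArg SimpleGraph.Dart.toProd hab
        simp only at h2
        exact SimpleGraph.Dart.ext _ _ h2
      have hHd := Nat.card_le_card_of_injective _ hinj2
      have hmul : Nat.card R * 6 ≤ Nat.card R * (Nat.card Rˣ - 1) :=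
        Nat.mul_le_mul_left _ (by omega)
      have hfinal : Nat.card R * 6 ≤ 6 * Nat.card R - 6 :=
        le_trans hmul (le_trans hGd (le_trans hHd (by omega)))
      omega
    have hm1 : 1 ≤ Nat.card (IsLocalRing.maximalIdeal R) := Nat.card_pos
    have hone_not : (1 : R) ∉ IsLocalRing.maximalIdeal R := by
      intro h1m
      exact ((IsLocalRing.mem_maximalIdeal _).mp h1m) isUnit_one
    constructor
    · by_contra hv
      push_neg at hv
      have hmlt : Nat.card (IsLocalRing.maximalIdeal R) < Nat.card R := by omega
      have hm2 : 2 * Nat.card (IsLocalRing.maximalIdeal R) ≤ Nat.card R := by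
        obtain ⟨k, hk⟩ := hdvd
        have hk2 : 2 ≤ k := by
          by_contra hkc
          push_neg at hkc
          interval_cases k <;> omega
        calc 2 * Nat.card (IsLocalRing.maximalIdeal R)
            = Nat.card (IsLocalRing.maximalIdeal R) * 2 := by ring
          _ ≤ Nat.card (IsLocalRing.maximalIdeal R) * k := Nat.mul_le_mul_left _ hk2
          _ = Nat.card R := hk.symm
      have hv3 : Nat.card R = 10 ∨ Nat.card R = 11 ∨ Nat.card R = 12 := by omega
      rcases hv3 with hv10 | hv11 | hv12
      · have h2m := CrosscapAux.mem_max_of_prime_dvd_card R Nat.prime_two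
          (by rw [hv10]; norm_num)
        have h5m := CrosscapAux.mem_max_of_prime_dvd_card R
          (by norm_num : Nat.Prime 5) (by rw [hv10]; norm_num)
        apply hone_not
        have heq : (1 : R) = ((5 : ℕ) : R) - 2 * ((2 : ℕ) : R) := by
          push_cast
          norm_num
        rw [heq]
        exact Submodule.sub_mem _ h5m (Ideal.mul_mem_left _ _ h2m)
      · have hm5 : 5 ≤ Nat.card (IsLocalRing.maximalIdeal R) := by omega
        have hdvd11 : Nat.card (IsLocalRing.maximalIdeal R) ∣ 11 := hv11 ▸ hdvd
        rcases (Nat.Prime.eq_one_or_self_of_dvd (by norm_num : Nat.Prime 11)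
          _ hdvd11) with h1 | h1 <;> omega
      · have h2m := CrosscapAux.mem_max_of_prime_dvd_card R Nat.prime_two
          (by rw [hv12]; norm_num)
        have h3m := CrosscapAux.mem_max_of_prime_dvd_card R Nat.prime_three
          (by rw [hv12]; norm_num)
        apply hone_not
        have heq : (1 : R) = ((3 : ℕ) : R) - ((2 : ℕ) : R) := by
          push_cast
          norm_num
        rw [heq]
        exact Submodule.sub_mem _ h3m h2m
    · intro hf
      have hfm := CrosscapAux.field_card_max R hf
      omega
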